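/- arXiv:0906.4932 — 2 statements merged into one kernel-verified Lean document; each statement's English description precedes it below -/
import Mathlib

section
/- Neither 1+√-7 nor 1-√-7 is a cube in the field ℚ(√-7). -/
open Polynomial in
lemma s_integral (s : ℂ) (hs : s ^ 2 = -7) : IsIntegral ℚ s := by
  refine ⟨X ^ 2 + C 7, ?_, ?_⟩
  · apply Polynomial.monic_X_pow_add_C
    norm_num
  · simp [hs]

lemma mem_repr (s : ℂ) (hs : s ^ 2 = -7) (w : ℂ)
    (hw : w ∈ IntermediateField.adjoin ℚ ({s} : Set ℂ)) :
    ∃ a b : ℚ, w = (a : ℂ) + (b : ℂ) * s := by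
  have h := IntermediateField.adjoin_simple_toSubalgebra_of_isAlgebraic (s_integral s hs).isAlgebraic
  have hw' : w ∈ Algebra.adjoin ℚ ({s} : Set ℂ) := by
    rw [← h]; exact hw
  clear hw
  induction hw' using Algebra.adjoin_induction with
  | mem x hx =>
    rcases hx with rfl
    exact ⟨0, 1, by simp⟩
  | algebraMap r => exact ⟨r, 0, by simp⟩
  | add x y hx hy ihx ihy =>
    obtain ⟨a, b, rfl⟩ := ihx
    obtain ⟨c, d, rfl⟩ := ihy
    exact ⟨a + c, b + d, by push_cast; ring⟩
  | mul x y hx hy ihx ihy =>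
    obtain ⟨a, b, rfl⟩ := ihx
    obtain ⟨c, d, rfl⟩ := ihy
    refine ⟨a * c - 7 * (b * d), a * d + b * c, ?_⟩
    push_cast
    linear_combination ((b : ℂ) * d) * hs

lemma even_sq_add (p : ℤ) : Even (p ^ 2 + p) := by
  rcases Int.even_or_odd p with ⟨k, hk⟩ | ⟨k, hk⟩
  · exact ⟨2 * k ^ 2 + k, by subst hk; ring⟩
  · exact ⟨2 * k ^ 2 + 3 * k + 1, by subst hk; ring⟩

lemma nat_even_of_sq_even (n : ℕ) (h : 2 ∣ (n : ℤ) ^ 2) : 2 ∣ n := by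
  rcases Nat.even_or_odd n with ⟨k, hk⟩ | ⟨k, hk⟩
  · exact ⟨k, by omega⟩
  · exfalso
    have hn : (n : ℤ) = 2 * (k : ℤ) + 1 := by exact_mod_cast congrArg (Nat.cast : ℕ → ℤ) hk
    have h2 : (n : ℤ) ^ 2 = 2 * (2 * (k:ℤ) ^ 2 + 2 * k) + 1 := by rw [hn]; ring
    obtain ⟨K, hK⟩ : ∃ K : ℤ, 2 * (k:ℤ) ^ 2 + 2 * k = K := ⟨_, rfl⟩
    rw [hK] at h2
    omega

lemma descent : ∀ (n : ℕ) (x y : ℤ), 0 < n →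
    x ^ 2 + 7 * y ^ 2 = 2 * (n : ℤ) ^ 2 → x ^ 3 - 21 * x * y ^ 2 = (n : ℤ) ^ 3 → False := by
  intro n
  induction n using Nat.strong_induction_on with
  | _ n ih =>
    intro x y hn h1 h2
    rcases Int.even_or_odd x with ⟨p, hp⟩ | ⟨p, hp⟩
    · rcases Int.even_or_odd y with ⟨q, hq⟩ | ⟨q, hq⟩
      · -- both even: descend
        have hx : x = 2 * p := by omega
        have hy : y = 2 * q := by omega
        subst hx hy
        have hne : 2 ∣ (n : ℤ) ^ 2 := ⟨p ^ 2 + 7 * q ^ 2, by linarith⟩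
        obtain ⟨m, rfl⟩ := nat_even_of_sq_even n hne
        have hm : 0 < m := by omega
        apply ih m (by omega) p q hm
        · have h1' : 4 * p ^ 2 + 28 * q ^ 2 = 2 * (2 * (m:ℤ)) ^ 2 := by push_cast at h1 ⊢; linarith
          nlinarith [h1']
        · have h2' : 8 * p ^ 3 - 168 * p * q ^ 2 = (2 * (m:ℤ)) ^ 3 := by push_cast at h2 ⊢; linarith
          nlinarith [h2']
      · -- x even, y odd
        have hx : x = 2 * p := by omega
        subst hx hq
        obtain ⟨P, hP⟩ : ∃ P : ℤ, p ^ 2 = P := ⟨_, rfl⟩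
        obtain ⟨Q, hQ⟩ : ∃ Q : ℤ, q ^ 2 + q = Q := ⟨_, rfl⟩
        obtain ⟨N, hN⟩ : ∃ N : ℤ, (n : ℤ) ^ 2 = N := ⟨_, rfl⟩
        have : 4 * P + 7 * (4 * Q + 1) = 2 * N := by
          rw [← hP, ← hQ, ← hN]; linear_combination h1
        omega
    · rcases Int.even_or_odd y with ⟨q, hq⟩ | ⟨q, hq⟩
      · -- x odd, y even
        have hy : y = 2 * q := by omega
        subst hp hy
        obtain ⟨P, hP⟩ : ∃ P : ℤ, p ^ 2 + p = P := ⟨_, rfl⟩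
        obtain ⟨Q, hQ⟩ : ∃ Q : ℤ, q ^ 2 = Q := ⟨_, rfl⟩
        obtain ⟨N, hN⟩ : ∃ N : ℤ, (n : ℤ) ^ 2 = N := ⟨_, rfl⟩
        have : (4 * P + 1) + 28 * Q = 2 * N := by
          rw [← hP, ← hQ, ← hN]; linear_combination h1
        omega
      · -- x, y both odd
        have hx2 : x ^ 2 = 4 * (p ^ 2 + p) + 1 := by rw [hp]; ring
        have hy2 : y ^ 2 = 4 * (q ^ 2 + q) + 1 := by rw [hq]; ring
        obtain ⟨P', hP'⟩ := even_sq_add p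
        obtain ⟨Q', hQ'⟩ := even_sq_add q
        have h8 : 2 * (n : ℤ) ^ 2 = 8 * (P' + 7 * Q' + 1) := by
          rw [← h1, hx2, hy2, hP', hQ']; ring
        have hn2 : 2 ∣ (n : ℤ) ^ 2 := ⟨2 * (P' + 7 * Q' + 1), by linarith⟩
        obtain ⟨m, rfl⟩ := nat_even_of_sq_even n hn2
        have e1 : x ^ 2 + 7 * y ^ 2 = 8 * (m : ℤ) ^ 2 := by push_cast at h1 ⊢; nlinarith [h1]
        have e2 : x ^ 3 - 21 * x * y ^ 2 = 8 * (m : ℤ) ^ 3 := by push_cast at h2 ⊢; nlinarith [h2]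
        have e3 : 7 * (x * y ^ 2) = 2 * ((m : ℤ) ^ 2 * x - (m : ℤ) ^ 3) := by
          have hsq : x ^ 2 = 8 * (m : ℤ) ^ 2 - 7 * y ^ 2 := by linarith
          have hx3 : x ^ 3 = x * (8 * (m : ℤ) ^ 2 - 7 * y ^ 2) := by
            rw [← hsq]; ring
          nlinarith [e2, hx3]
        obtain ⟨k, hk⟩ : ∃ k : ℤ, x * y ^ 2 = 2 * k + 1 :=
          ⟨4 * p * q ^ 2 + 4 * p * q + p + 2 * q ^ 2 + 2 * q, by rw [hp, hq]; ring⟩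
        obtain ⟨U, hU⟩ : ∃ U : ℤ, (m : ℤ) ^ 2 * x - (m : ℤ) ^ 3 = U := ⟨_, rfl⟩
        rw [hk, hU] at e3
        omega

lemma rat_no (a b : ℚ) (h1 : a ^ 3 - 21 * a * b ^ 2 = 1)
    (h2 : (3 * a ^ 2 * b - 7 * b ^ 3) ^ 2 = 1) : False := by
  have hnorm : (a ^ 2 + 7 * b ^ 2) ^ 3 = 8 := by
    linear_combination (a ^ 3 - 21 * a * b ^ 2 + 1) * h1 + 7 * h2
  have ht : a ^ 2 + 7 * b ^ 2 = 2 := by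
    have hfac : (a ^ 2 + 7 * b ^ 2 - 2) * ((a ^ 2 + 7 * b ^ 2 + 1) ^ 2 + 3) = 0 := by
      linear_combination hnorm
    have hpos : (a ^ 2 + 7 * b ^ 2 + 1) ^ 2 + 3 > 0 := by positivity
    rcases mul_eq_zero.mp hfac with h | h
    · linarith
    · linarith
  -- move to integers
  have hadq : ((a.den : ℚ)) ≠ 0 := by exact_mod_cast a.den_nz
  have hbdq : ((b.den : ℚ)) ≠ 0 := by exact_mod_cast b.den_nz
  have hanum : (a.num : ℚ) = a * a.den := (div_eq_iff hadq).mp (Rat.num_div_den a)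
  have hbnum : (b.num : ℚ) = b * b.den := (div_eq_iff hbdq).mp (Rat.num_div_den b)
  set n : ℕ := a.den * b.den with hn
  set x : ℤ := a.num * (b.den : ℤ) with hx
  set y : ℤ := b.num * (a.den : ℤ) with hy
  have hnpos : 0 < n := Nat.mul_pos a.pos b.pos
  have e1 : x ^ 2 + 7 * y ^ 2 = 2 * (n : ℤ) ^ 2 := by
    have : ((x : ℚ)) ^ 2 + 7 * ((y : ℚ)) ^ 2 = 2 * ((n : ℚ)) ^ 2 := by
      rw [hx, hy, hn]
      push_cast [hanum, hbnum]
      linear_combination ((a.den : ℚ) * (b.den : ℚ)) ^ 2 * ht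
    exact_mod_cast this
  have e2 : x ^ 3 - 21 * x * y ^ 2 = (n : ℤ) ^ 3 := by
    have : ((x : ℚ)) ^ 3 - 21 * (x : ℚ) * ((y : ℚ)) ^ 2 = ((n : ℚ)) ^ 3 := by
      rw [hx, hy, hn]
      push_cast [hanum, hbnum]
      linear_combination ((a.den : ℚ) * (b.den : ℚ)) ^ 3 * h1
    exact_mod_cast this
  exact descent n x y hnpos e1 e2

lemma indep (s : ℂ) (hs : s ^ 2 = -7) {a b c d : ℚ}
    (h : (a : ℂ) + (b : ℂ) * s = (c : ℂ) + (d : ℂ) * s) : a = c ∧ b = d := by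
  by_cases hbd : b = d
  · subst hbd
    have hac : (a : ℂ) = (c : ℂ) := by linear_combination h
    exact ⟨by exact_mod_cast hac, rfl⟩
  · exfalso
    have hbd' : ((b : ℂ) - (d : ℂ)) ≠ 0 := by
      intro hc
      apply hbd
      have : (b : ℂ) = (d : ℂ) := by linear_combination hc
      exact_mod_cast this
    have hsval : s = ((c - a : ℚ) : ℂ) / ((b - d : ℚ) : ℂ) := by
      push_cast
      field_simp
      push_cast at hbd' ⊢
      linear_combination h
    set q : ℚ := (c - a) / (b - d) with hq
    have hbd'' : (b - d : ℚ) ≠ 0 := sub_ne_zero.mpr hbd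
    have hsq : s = (q : ℂ) := by
      rw [hsval, hq]
      push_cast
      rfl
    have : ((q ^ 2 : ℚ) : ℂ) = ((-7 : ℚ) : ℂ) := by
      push_cast
      rw [← hsq, hs]
    have hq2 : q ^ 2 = -7 := by exact_mod_cast this
    nlinarith [sq_nonneg q]

/-- Neither 1+√-7 nor 1-√-7 is a cube in the field ℚ(√-7) ⊆ ℂ. -/
theorem stmt1 (s : ℂ) (hs : s ^ 2 = -7) :
    (¬ ∃ w ∈ IntermediateField.adjoin ℚ ({s} : Set ℂ), w ^ 3 = 1 + s) ∧
      (¬ ∃ w ∈ IntermediateField.adjoin ℚ ({s} : Set ℂ), w ^ 3 = 1 - s) := by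
  constructor
  · rintro ⟨w, hw, hcube⟩
    obtain ⟨a, b, rfl⟩ := mem_repr s hs w hw
    have hexp : ((a ^ 3 - 21 * a * b ^ 2 : ℚ) : ℂ) + ((3 * a ^ 2 * b - 7 * b ^ 3 : ℚ) : ℂ) * s
        = ((1 : ℚ) : ℂ) + ((1 : ℚ) : ℂ) * s := by
      push_cast
      linear_combination hcube + (-3 * (a : ℂ) * (b : ℂ) ^ 2 - (b : ℂ) ^ 3 * s) * hs
    obtain ⟨hA, hB⟩ := indep s hs hexp
    exact rat_no a b hA (by rw [hB]; norm_num)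
  · rintro ⟨w, hw, hcube⟩
    obtain ⟨a, b, rfl⟩ := mem_repr s hs w hw
    have hexp : ((a ^ 3 - 21 * a * b ^ 2 : ℚ) : ℂ) + ((3 * a ^ 2 * b - 7 * b ^ 3 : ℚ) : ℂ) * s
        = ((1 : ℚ) : ℂ) + ((-1 : ℚ) : ℂ) * s := by
      push_cast
      linear_combination hcube + (-3 * (a : ℂ) * (b : ℂ) ^ 2 - (b : ℂ) ^ 3 * s) * hs
    obtain ⟨hA, hB⟩ := indep s hs hexp
    exact rat_no a b hA (by rw [hB]; norm_num)
end

section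
/- For k = ℚ(√6), the completion ℓ_{𝔳₂} := k_{𝔳₂} ⊗_k ℓ at the unique place 𝔳₂ of k over 2 is an unramified field extension of k_{𝔳₂}, where ℓ = ℚ(√6, ζ₃). -/
open NumberField Module Ideal UniqueFactorizationMonoid Polynomial
set_option synthInstance.maxHeartbeats 1000000
set_option maxHeartbeats 2000000

private lemma ring_card_two {R : Type*} [CommRing R] (h : Nat.card R = 2) (x : R) :
    x = 0 ∨ x = 1 := by
  obtain ⟨y, hy, hy'⟩ := (Nat.card_eq_two_iff' (0 : R)).mp h
  have h10 : (1 : R) ≠ 0 := by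
    intro h1
    have : Subsingleton R := subsingleton_of_zero_eq_one h1.symm
    exact hy (Subsingleton.elim _ _)
  by_cases hx : x = 0
  · exact Or.inl hx
  · exact Or.inr ((hy' x hx).trans (hy' 1 h10).symm)

private theorem aux (K L : Type*) [Field K] [Field L] [NumberField K] [NumberField L]
    [Algebra K L] (hrank : finrank K L = 2) (w : 𝓞 L) (hw : w ^ 2 + w + 1 = 0)
    (𝔭 : Ideal (𝓞 K)) (hp : 𝔭.IsPrime) (hbot : 𝔭 ≠ ⊥)
    (h2 : (2 : 𝓞 K) ∈ 𝔭) (hcard : Ideal.absNorm 𝔭 = 2) :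
    (∃! P : Ideal (𝓞 L), P.IsPrime ∧ P ≠ ⊥ ∧ P.comap (algebraMap (𝓞 K) (𝓞 L)) = 𝔭) ∧
    (∀ P : Ideal (𝓞 L), P.IsPrime → P ≠ ⊥ → P.comap (algebraMap (𝓞 K) (𝓞 L)) = 𝔭 →
      Ideal.ramificationIdx' 𝔭 P = 1 ∧
      Ideal.inertiaDeg' 𝔭 P = 2) := by
  classical
  have hmax : 𝔭.IsMaximal := Ideal.IsPrime.isMaximal hp hbot
  have hsum := Ideal.sum_ramification_inertia (R := 𝓞 K) (S := 𝓞 L) (p := 𝔭) K L hbot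
  rw [hrank] at hsum
  have hinj : Function.Injective (algebraMap (𝓞 K) (𝓞 L)) := by
    intro x y hxy
    have := congrArg (algebraMap (𝓞 L) L) hxy
    rw [← IsScalarTower.algebraMap_apply, ← IsScalarTower.algebraMap_apply] at this
    exact (FaithfulSMul.algebraMap_injective (𝓞 K) L) this
  have hmapbot : Ideal.map (algebraMap (𝓞 K) (𝓞 L)) 𝔭 ≠ ⊥ := by
    rwa [Ne, Ideal.map_eq_bot_iff_of_injective hinj]
  have hmem : ∀ P : Ideal (𝓞 L), P ∈ (factors (Ideal.map (algebraMap (𝓞 K) (𝓞 L)) 𝔭)).toFinset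
      ↔ (P.IsPrime ∧ Ideal.map (algebraMap (𝓞 K) (𝓞 L)) 𝔭 ≤ P) := by
    intro P
    rw [Multiset.mem_toFinset, factors_eq_normalizedFactors,
      Ideal.mem_normalizedFactors_iff hmapbot]
  -- membership characterization via comap
  have hmem' : ∀ P : Ideal (𝓞 L), P.IsPrime → P ≠ ⊥ →
      P.comap (algebraMap (𝓞 K) (𝓞 L)) = 𝔭 →
      P ∈ (factors (Ideal.map (algebraMap (𝓞 K) (𝓞 L)) 𝔭)).toFinset := by
    intro P hP _ hcom
    exact (hmem P).mpr ⟨hP, Ideal.map_le_iff_le_comap.mpr hcom.ge⟩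
  -- every member of the factors has inertia degree ≥ 2
  have httwo : (2 : 𝓞 K ⧸ 𝔭) = 0 := by
    have : ((2 : 𝓞 K) : 𝓞 K ⧸ 𝔭) = 0 := Ideal.Quotient.eq_zero_iff_mem.mpr h2
    simpa [map_ofNat] using this
  have hf : ∀ P ∈ (factors (Ideal.map (algebraMap (𝓞 K) (𝓞 L)) 𝔭)).toFinset,
      2 ≤ Ideal.inertiaDeg' 𝔭 P := by
    intro P hP
    obtain ⟨hPprime, hPle⟩ := (hmem P).mp hP
    haveI := hPprime
    have hPbot : P ≠ ⊥ := fun h => hmapbot (le_bot_iff.mp (h ▸ hPle))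
    have hcom : P.comap (algebraMap (𝓞 K) (𝓞 L)) = 𝔭 := by
      have h1 : 𝔭 ≤ P.comap (algebraMap (𝓞 K) (𝓞 L)) := Ideal.map_le_iff_le_comap.mp hPle
      exact (hmax.eq_of_le (Ideal.IsPrime.comap _).ne_top h1).symm
    haveI : P.LiesOver 𝔭 := ⟨hcom.symm⟩
    have hpos : 0 < Ideal.inertiaDeg' 𝔭 P :=
      Ideal.inertiaDeg'_pos 𝔭 P
    by_contra hlt
    push_neg at hlt
    have hone : Ideal.inertiaDeg' 𝔭 P = 1 := by omega
    rw [Ideal.inertiaDeg_algebraMap] at hone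
    -- the quotient 𝓞 L ⧸ P is spanned by 1 over 𝓞 K ⧸ 𝔭
    haveI : Nontrivial (𝓞 L ⧸ P) := Ideal.Quotient.nontrivial_of_liesOver_of_isPrime P 𝔭
    letI : Field (𝓞 K ⧸ 𝔭) := Ideal.Quotient.field 𝔭
    have hspan := (finrank_eq_one_iff_of_nonzero' (1 : 𝓞 L ⧸ P) one_ne_zero).mp hone
    obtain ⟨c, hc⟩ := hspan (Ideal.Quotient.mk P w)
    rw [Algebra.smul_def, mul_one] at hc
    have hα : (Ideal.Quotient.mk P w) ^ 2 + (Ideal.Quotient.mk P w) + 1 = 0 := by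
      have := congrArg (Ideal.Quotient.mk P) hw
      simpa using this
    have hcmap : (algebraMap (𝓞 K ⧸ 𝔭) (𝓞 L ⧸ P)) (c ^ 2 + c + 1) = 0 := by
      rw [map_add, map_add, map_pow, map_one, hc, hα]
    have hcinj : c ^ 2 + c + 1 = 0 :=
      (algebraMap (𝓞 K ⧸ 𝔭) (𝓞 L ⧸ P)).injective (by rwa [map_zero])
    have hcardq : Nat.card (𝓞 K ⧸ 𝔭) = 2 := by
      rwa [Ideal.absNorm_apply, Submodule.cardQuot_apply] at hcard
    rcases ring_card_two hcardq c with rfl | rfl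
    · exact one_ne_zero (α := 𝓞 K ⧸ 𝔭) (by linear_combination hcinj)
    · exact one_ne_zero (α := 𝓞 K ⧸ 𝔭) (by linear_combination hcinj - httwo)
  -- ramification indices are positive
  have he : ∀ P ∈ (factors (Ideal.map (algebraMap (𝓞 K) (𝓞 L)) 𝔭)).toFinset,
      Ideal.ramificationIdx' 𝔭 P ≠ 0 := by
    intro P hP
    obtain ⟨hPprime, hPle⟩ := (hmem P).mp hP
    exact IsDedekindDomain.ramificationIdx_ne_zero hmapbot hPprime hPle
  -- terms in the sum are at least 2
  have hterm : ∀ P ∈ (factors (Ideal.map (algebraMap (𝓞 K) (𝓞 L)) 𝔭)).toFinset,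
      2 ≤ Ideal.ramificationIdx' 𝔭 P *
        Ideal.inertiaDeg' 𝔭 P := by
    intro P hP
    have h1 := hf P hP
    have h2 := Nat.pos_of_ne_zero (he P hP)
    calc 2 ≤ Ideal.inertiaDeg' 𝔭 P := h1
    _ ≤ _ := Nat.le_mul_of_pos_left _ h2
  have hcard1 : (factors (Ideal.map (algebraMap (𝓞 K) (𝓞 L)) 𝔭)).toFinset.card ≤ 1 := by
    by_contra hgt
    push_neg at hgt
    have := Finset.card_nsmul_le_sum _ _ 2 hterm
    rw [hsum, smul_eq_mul] at this
    omega
  -- existence of a prime above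
  obtain ⟨Q, -, hQp, hQc⟩ := Ideal.exists_ideal_over_prime_of_isIntegral 𝔭 (⊥ : Ideal (𝓞 L))
    (by
      intro x hx
      obtain rfl : x = 0 := hinj (by simpa using hx)
      exact 𝔭.zero_mem)
  have hQbot : Q ≠ ⊥ := by
    rintro rfl
    rw [← Ideal.comap_bot_of_injective _ hinj] at hbot
    exact hbot hQc.symm
  refine ⟨⟨Q, ⟨hQp, hQbot, hQc⟩, ?_⟩, ?_⟩
  · rintro P ⟨hP1, hP2, hP3⟩
    exact Finset.card_le_one.mp hcard1 P (hmem' P hP1 hP2 hP3) Q (hmem' Q hQp hQbot hQc)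
  · intro P hP1 hP2 hP3
    have hPT := hmem' P hP1 hP2 hP3
    have h1 := hf P hPT
    have h2 := Nat.pos_of_ne_zero (he P hPT)
    have h3 : Ideal.ramificationIdx' 𝔭 P *
        Ideal.inertiaDeg' 𝔭 P ≤ 2 := by
      exact le_trans (Finset.single_le_sum
        (f := fun P => Ideal.ramificationIdx' 𝔭 P *
          Ideal.inertiaDeg' 𝔭 P)
        (fun i _ => Nat.zero_le _) hPT) hsum.le
    have h4 : Ideal.inertiaDeg' 𝔭 P ≤
        Ideal.ramificationIdx' 𝔭 P *
        Ideal.inertiaDeg' 𝔭 P := Nat.le_mul_of_pos_left _ h2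
    have hf2 : Ideal.inertiaDeg' 𝔭 P = 2 := by omega
    rw [hf2] at h3
    constructor
    · omega
    · exact hf2

private lemma no_rat_sq6 (q : ℚ) : q ^ 2 ≠ 6 := by
  intro h
  have hint : IsIntegral ℤ q :=
    ⟨X ^ 2 - C 6, monic_X_pow_sub_C _ two_ne_zero, by simp [h]⟩
  obtain ⟨n, rfl⟩ := IsIntegrallyClosed.isIntegral_iff.mp hint
  have h6 : n ^ 2 = 6 := by
    have h' : ((n : ℚ)) ^ 2 = 6 := by rwa [show (algebraMap ℤ ℚ) n = (n : ℚ) by simp] at h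
    exact_mod_cast h'
  have hdvd6 : (2 : ℤ) ∣ n ^ 2 := by rw [h6]; norm_num
  have h2 : (2 : ℤ) ∣ n := Int.Prime.dvd_pow' (by norm_num) hdvd6
  obtain ⟨m, rfl⟩ := h2
  have h4 : 4 * m ^ 2 = 6 := by ring_nf at h6 ⊢; linarith
  generalize m ^ 2 = k at h4
  omega

/-- For k = ℚ(√6) and ℓ = ℚ(√6, ζ₃), the place 𝔳₂ of k over 2 does not split in ℓ and is
unramified there: every nonzero prime 𝔭 of 𝓞_k containing 2 has a unique prime P of 𝓞_ℓ
above it, and that prime has ramification index 1 and inertia degree 2 over 𝔭 (so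
ℓ ⊗_k k_{𝔳₂} is an unramified quadratic field extension of k_{𝔳₂}). -/
theorem stmt15 (ℓ : Type) [Field ℓ] [NumberField ℓ] (r6 z : ℓ)
    (h6 : r6 ^ 2 = 6) (hz : IsPrimitiveRoot z 3) (hdim : Module.finrank ℚ ℓ = 4) :
    ∀ 𝔭 : Ideal (𝓞 (IntermediateField.adjoin ℚ ({r6} : Set ℓ))),
      𝔭.IsPrime → 𝔭 ≠ ⊥ → (2 : 𝓞 (IntermediateField.adjoin ℚ ({r6} : Set ℓ))) ∈ 𝔭 →
      (∃! P : Ideal (𝓞 ℓ), P.IsPrime ∧ P ≠ ⊥ ∧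
        P.comap (algebraMap (𝓞 (IntermediateField.adjoin ℚ ({r6} : Set ℓ))) (𝓞 ℓ)) = 𝔭) ∧
      (∀ P : Ideal (𝓞 ℓ), P.IsPrime → P ≠ ⊥ →
        P.comap (algebraMap (𝓞 (IntermediateField.adjoin ℚ ({r6} : Set ℓ))) (𝓞 ℓ)) = 𝔭 →
        Ideal.ramificationIdx' 𝔭 P = 1 ∧
        Ideal.inertiaDeg' 𝔭 P = 2) := by
  have hr6K : r6 ∈ IntermediateField.adjoin ℚ ({r6} : Set ℓ) :=
    IntermediateField.mem_adjoin_simple_self ℚ r6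
  set K := IntermediateField.adjoin ℚ ({r6} : Set ℓ) with hKdef
  have hint : IsIntegral ℚ r6 :=
    ⟨X ^ 2 - C 6, monic_X_pow_sub_C _ two_ne_zero, by simp [h6]⟩
  have hdeg : (minpoly ℚ r6).natDegree = 2 := by
    have hdvd : minpoly ℚ r6 ∣ X ^ 2 - C 6 := minpoly.dvd ℚ r6 (by simp [h6])
    have hle : (minpoly ℚ r6).natDegree ≤ 2 := by
      have := Polynomial.natDegree_le_of_dvd hdvd
        (monic_X_pow_sub_C (6 : ℚ) two_ne_zero).ne_zero
      simpa using this
    have hge : 2 ≤ (minpoly ℚ r6).natDegree := by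
      rw [minpoly.two_le_natDegree_iff hint]
      rintro ⟨q, rfl⟩
      exact no_rat_sq6 q ((algebraMap ℚ ℓ).injective (by rw [map_pow, map_ofNat]; exact h6))
    omega
  have hKrank : finrank ℚ K = 2 := by
    rw [hKdef, IntermediateField.adjoin.finrank hint, hdeg]
  have hLrank : finrank K ℓ = 2 := by
    have htower : finrank ℚ K * finrank K ℓ = finrank ℚ ℓ := finrank_mul_finrank ℚ K ℓ
    rw [hKrank, hdim] at htower
    omega
  -- the cube root of unity as an algebraic integer
  have hz3 : z ^ 3 = 1 := hz.pow_eq_one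
  have hzq : z ^ 2 + z + 1 = 0 := by
    have hz1 : z ≠ 1 := hz.ne_one (by norm_num)
    have hfac : (z - 1) * (z ^ 2 + z + 1) = 0 := by linear_combination hz3
    rcases mul_eq_zero.mp hfac with h | h
    · exact absurd (sub_eq_zero.mp h) hz1
    · exact h
  have hzint : IsIntegral ℤ z :=
    ⟨X ^ 3 - C 1, monic_X_pow_sub_C _ three_ne_zero, by simp [hz3]⟩
  set w : 𝓞 ℓ := ⟨z, hzint⟩ with hwdef
  have hw : w ^ 2 + w + 1 = 0 := by
    apply RingOfIntegers.coe_injective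
    rw [map_add, map_add, map_pow, map_one, map_zero]
    exact hzq
  intro 𝔭 hp hbot h2
  -- the square root of six as an algebraic integer of K
  have hx6 : (⟨r6, hr6K⟩ : K) ^ 2 = 6 := by
    apply Subtype.ext
    push_cast
    exact h6
  have hr6int : IsIntegral ℤ (⟨r6, hr6K⟩ : K) :=
    ⟨X ^ 2 - C 6, monic_X_pow_sub_C _ two_ne_zero, by simp [hx6]⟩
  set r6' : 𝓞 K := ⟨⟨r6, hr6K⟩, hr6int⟩ with hr6def
  have hr6sq : r6' ^ 2 = 6 := by
    apply RingOfIntegers.coe_injective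
    rw [map_pow]
    have : (algebraMap (𝓞 K) K) r6' = (⟨r6, hr6K⟩ : K) := rfl
    rw [this, hx6]
    exact (map_ofNat (algebraMap (𝓞 K) K) 6).symm
  have h6mem : (6 : 𝓞 K) ∈ 𝔭 := by
    have : (6 : 𝓞 K) = 2 * 3 := by norm_num
    rw [this]
    exact Ideal.mul_mem_right _ _ h2
  have hr6mem : r6' ∈ 𝔭 := hp.mem_of_pow_mem 2 (by rw [hr6sq]; exact h6mem)
  set I : Ideal (𝓞 K) := Ideal.span {2, r6'} with hIdef
  have hI𝔭 : I ≤ 𝔭 := by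
    rw [hIdef, Ideal.span_le]
    rintro x hx
    simp only [Set.mem_insert_iff, Set.mem_singleton_iff] at hx
    rcases hx with rfl | rfl
    · exact h2
    · exact hr6mem
  have hIsq : I * I = Ideal.span {(2 : 𝓞 K)} := by
    rw [hIdef, Ideal.span_pair_mul_span_pair]
    apply le_antisymm
    · rw [Ideal.span_le]
      rintro x hx
      simp only [Set.mem_insert_iff, Set.mem_singleton_iff] at hx
      rw [SetLike.mem_coe, Ideal.mem_span_singleton]
      rcases hx with rfl | rfl | rfl | rfl
      · exact ⟨2, by norm_num⟩
      · exact ⟨r6', rfl⟩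
      · exact ⟨r6', by ring⟩
      · exact ⟨3, by rw [show r6' * r6' = r6' ^ 2 by ring, hr6sq]; norm_num⟩
    · rw [Ideal.span_le, Set.singleton_subset_iff, SetLike.mem_coe]
      have hm1 : r6' * r6' ∈ Ideal.span {2 * 2, 2 * r6', r6' * 2, r6' * r6'} :=
        Ideal.subset_span (by simp)
      have hm2 : (2 : 𝓞 K) * 2 ∈ Ideal.span {2 * 2, 2 * r6', r6' * 2, r6' * r6'} :=
        Ideal.subset_span (by simp)
      have key : (2 : 𝓞 K) = r6' * r6' - 2 * 2 := by
        rw [show r6' * r6' = r6' ^ 2 by ring, hr6sq]; norm_num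
      have hsub := sub_mem hm1 hm2
      rwa [← key] at hsub
  have hnorm2 : Ideal.absNorm (Ideal.span {(2 : 𝓞 K)}) = 4 := by
    rw [Ideal.absNorm_span_singleton]
    rw [show (2 : 𝓞 K) = algebraMap ℤ (𝓞 K) 2 by norm_num]
    rw [Algebra.norm_algebraMap_of_basis (RingOfIntegers.basis K)]
    have hcardb : Fintype.card (Module.Free.ChooseBasisIndex ℤ (𝓞 K)) = 2 := by
      rw [← Module.finrank_eq_card_chooseBasisIndex, RingOfIntegers.rank, hKrank]
    rw [hcardb]
    norm_num
  have hnormI : Ideal.absNorm I = 2 := by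
    have hh := congrArg Ideal.absNorm hIsq
    rw [_root_.map_mul, hnorm2] at hh
    nlinarith [hh]
  have hcard : Ideal.absNorm 𝔭 = 2 := by
    have hdvd : Ideal.absNorm 𝔭 ∣ Ideal.absNorm I := Ideal.absNorm_dvd_absNorm_of_le hI𝔭
    rw [hnormI] at hdvd
    rcases (Nat.prime_two.eq_one_or_self_of_dvd _ hdvd) with h | h
    · exact absurd (Ideal.absNorm_eq_one_iff.mp h) hp.ne_top
    · exact h
  exact aux K ℓ hLrank w hw 𝔭 hp hbot h2 hcard
end
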